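/- Finite linear combinations of half-space indicator functions are uniformly dense in the continuous functions on the unit cube: for every n ≥ 1, every continuous function f : [0,1]^n → ℝ, and every ε > 0, there exist a natural number N, real coefficients p_1, …, p_N, vectors w_1, …, w_N ∈ ℝ^n, and reals b_1, …, b_N such that |f(x) − Σ_{j=1}^N p_j · 1(⟨w_j, x⟩ − b_j > 0)| < ε for all x ∈ [0,1]^n. -/

import Mathlib

open Finset

lemma exp_step_approx (M δ : ℝ) (hM : 0 < M) (hδ : 0 < δ) :
    ∃ (m : ℕ) (q b : ℕ → ℝ), ∀ t ∈ Set.Icc (-M) M,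
      |Real.exp t - ∑ j ∈ range m, q j * (if t - b j > 0 then (1:ℝ) else 0)| ≤ δ := by
  obtain ⟨m, hm1, hmbig⟩ : ∃ m : ℕ, 1 ≤ m ∧ Real.exp M * (2 * M) / m ≤ δ := by
    refine ⟨⌈Real.exp M * (2 * M) / δ⌉₊ + 1, le_add_self, ?_⟩
    rw [div_le_iff₀ (by positivity)]
    calc Real.exp M * (2 * M) ≤ ⌈Real.exp M * (2 * M) / δ⌉₊ * δ := by
          rw [← div_le_iff₀ hδ]; exact Nat.le_ceil _
      _ ≤ δ * ↑(⌈Real.exp M * (2 * M) / δ⌉₊ + 1) := by push_cast; nlinarith [hδ]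
  set h : ℝ := 2 * M / m with hh
  have hmpos : (0:ℝ) < m := by exact_mod_cast hm1
  have hhpos : 0 < h := by positivity
  set T : ℕ → ℝ := fun j => -M + j * h with hT
  refine ⟨m + 1,
    (fun j => if j = 0 then Real.exp (-M) else Real.exp (T j) - Real.exp (T (j - 1))),
    (fun j => if j = 0 then -M - 1 else T (j - 1)), ?_⟩
  intro t ht
  obtain ⟨ht1, ht2⟩ := ht
  set K0 : ℕ := ⌈(t + M) / h⌉₊ with hK0
  set K : ℕ := min m K0 with hK
  have hTm : T m = M := by
    show -M + (m:ℝ) * h = M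
    rw [hh]; field_simp; ring
  have hKm : K ≤ m := min_le_left _ _
  have hsum : ∑ j ∈ range (m + 1),
      (if j = 0 then Real.exp (-M) else Real.exp (T j) - Real.exp (T (j - 1))) *
        (if t - (if j = 0 then -M - 1 else T (j - 1)) > 0 then (1:ℝ) else 0)
      = Real.exp (T K) := by
    rw [Finset.sum_range_succ']
    simp only [Nat.succ_ne_zero, ite_false, Nat.add_sub_cancel]
    have key : ∀ j ∈ range m,
        (Real.exp (T (j+1)) - Real.exp (T j)) * (if t - T j > 0 then (1:ℝ) else 0)
        = if j < K then Real.exp (T (j+1)) - Real.exp (T j) else 0 := by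
      intro j hj
      rw [mem_range] at hj
      have hcond : (t - T j > 0) ↔ j < K := by
        constructor
        · intro hc
          refine lt_min hj (Nat.lt_ceil.2 ?_)
          rw [lt_div_iff₀ hhpos]
          simp only [hT] at hc ⊢; linarith
        · intro hc
          have := Nat.lt_ceil.1 (lt_of_lt_of_le hc (min_le_right _ _))
          rw [lt_div_iff₀ hhpos] at this
          simp only [hT]; linarith
      by_cases hc : t - T j > 0
      · rw [if_pos hc, if_pos (hcond.1 hc), mul_one]
      · rw [if_neg hc, if_neg (fun hk => hc (hcond.2 hk)), mul_zero]
    rw [Finset.sum_congr rfl key, ← Finset.sum_filter]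
    have hfil : (range m).filter (fun j => j < K) = range K := by
      ext j; simp only [mem_filter, mem_range]; omega
    rw [hfil, Finset.sum_range_sub (fun j => Real.exp (T j))]
    have hT0 : T 0 = -M := by show -M + (0:ℕ) * h = -M; simp
    have e1 : t - (-M - 1) > 0 := by linarith
    rw [hT0]
    norm_num [e1]
  rw [hsum]
  -- now the error bound
  have htK : t ≤ T K := by
    rcases le_or_gt K0 m with hc | hc
    · have : K = K0 := by omega
      rw [this]
      have := Nat.le_ceil ((t + M) / h)
      rw [div_le_iff₀ hhpos] at this
      show t ≤ -M + (K0:ℝ) * h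
      linarith
    · have : K = m := by omega
      rw [this, hTm]; exact ht2
  have hTKt : T K - t ≤ h := by
    rcases Nat.eq_zero_or_pos K with h0 | hpos
    · rw [h0]
      have hT0 : T 0 = -M := by show -M + (0:ℕ) * h = -M; simp
      rw [hT0]; linarith
    · obtain ⟨k, hk1⟩ : ∃ k, K = k + 1 := ⟨K - 1, by omega⟩
      have hk : k < K0 := by omega
      have h2 := Nat.lt_ceil.1 hk
      rw [lt_div_iff₀ hhpos] at h2
      rw [hk1]
      show -M + ((k+1 : ℕ):ℝ) * h - t ≤ h
      push_cast; linarith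
  have hTKM : T K ≤ M := by
    calc T K ≤ T m := by
          show -M + (K:ℝ) * h ≤ -M + (m:ℝ) * h
          have : (K:ℝ) ≤ m := by exact_mod_cast hKm
          nlinarith
      _ = M := hTm
  have hmono : Real.exp t ≤ Real.exp (T K) := Real.exp_le_exp.2 htK
  have hdiff : Real.exp (T K) - Real.exp t ≤ Real.exp (T K) * (T K - t) := by
    have h1 : (t - T K) + 1 ≤ Real.exp (t - T K) := Real.add_one_le_exp _
    have h2 : Real.exp t = Real.exp (T K) * Real.exp (t - T K) := by
      rw [← Real.exp_add]; ring_nf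
    nlinarith [Real.exp_pos (T K)]
  have hfin : Real.exp (T K) - Real.exp t ≤ δ := by
    have h3 : Real.exp (T K) * (T K - t) ≤ Real.exp M * h := by
      have := Real.exp_pos (T K)
      have hle : Real.exp (T K) ≤ Real.exp M := Real.exp_le_exp.2 hTKM
      nlinarith [sub_nonneg.2 htK]
    have h4 : Real.exp M * h ≤ δ := by rw [hh]; rw [mul_div_assoc] at hmbig; exact hmbig
    linarith
  rw [abs_sub_comm, abs_of_nonneg (by linarith)]
  linarith

/-- Functions exactly representable as finite combinations of half-space indicators. -/
def IsComb (n : ℕ) (g : (Fin n → ℝ) → ℝ) : Prop :=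
  ∃ (N : ℕ) (p : ℕ → ℝ) (w : ℕ → Fin n → ℝ) (b : ℕ → ℝ),
    ∀ x, g x = ∑ j ∈ range N, p j * (if (∑ i, w j i * x i) - b j > 0 then (1:ℝ) else 0)

lemma isComb_zero (n : ℕ) : IsComb n (fun _ => 0) :=
  ⟨0, 0, 0, 0, fun x => by simp⟩

lemma isComb_add {n : ℕ} {g₁ g₂ : (Fin n → ℝ) → ℝ} (h₁ : IsComb n g₁) (h₂ : IsComb n g₂) :
    IsComb n (fun x => g₁ x + g₂ x) := by
  obtain ⟨N₁, p₁, w₁, b₁, e₁⟩ := h₁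
  obtain ⟨N₂, p₂, w₂, b₂, e₂⟩ := h₂
  refine ⟨N₁ + N₂, (fun j => if j < N₁ then p₁ j else p₂ (j - N₁)),
    (fun j => if j < N₁ then w₁ j else w₂ (j - N₁)),
    (fun j => if j < N₁ then b₁ j else b₂ (j - N₁)), fun x => ?_⟩
  show g₁ x + g₂ x = _
  rw [Finset.sum_range_add, e₁ x, e₂ x]
  congr 1
  · exact Finset.sum_congr rfl fun j hj => by
      rw [mem_range] at hj; simp [if_pos hj]
  · exact Finset.sum_congr rfl fun j hj => by
      have : ¬ (N₁ + j < N₁) := by omega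
      simp [this]

lemma isComb_sum {n : ℕ} {ι : Type*} (s : Finset ι) (g : ι → (Fin n → ℝ) → ℝ)
    (h : ∀ i ∈ s, IsComb n (g i)) : IsComb n (fun x => ∑ i ∈ s, g i x) := by
  classical
  induction s using Finset.cons_induction with
  | empty => simpa using isComb_zero n
  | cons a s ha ih =>
      simp only [Finset.sum_cons]
      exact isComb_add (h a (Finset.mem_cons_self a s))
        (ih fun i hi => h i (Finset.mem_cons_of_mem hi))

lemma isComb_ridge (n : ℕ) (c : ℝ) (w : Fin n → ℝ) (δ : ℝ) (hδ : 0 < δ) :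
    ∃ g, IsComb n g ∧ ∀ x : Fin n → ℝ, (∀ i, x i ∈ Set.Icc (0:ℝ) 1) →
      |c * Real.exp (∑ i, w i * x i) - g x| ≤ δ := by
  set M := (∑ i, |w i|) + 1 with hMdef
  have hM : 0 < M := by positivity
  obtain ⟨m, q, b, hstep⟩ := exp_step_approx M (δ/(|c|+1)) hM (by positivity)
  refine ⟨fun x => ∑ j ∈ range m, (c * q j) * (if (∑ i, w i * x i) - b j > 0 then (1:ℝ) else 0),
    ⟨m, fun j => c * q j, fun _ => w, b, fun x => rfl⟩, ?_⟩
  intro x hx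
  have habs : |∑ i, w i * x i| ≤ ∑ i, |w i| := by
    calc |∑ i, w i * x i| ≤ ∑ i, |w i * x i| := Finset.abs_sum_le_sum_abs _ _
      _ ≤ ∑ i, |w i| := Finset.sum_le_sum fun i _ => by
          rw [abs_mul]
          have h1 : |x i| ≤ 1 := abs_le.2 ⟨by linarith [(hx i).1], (hx i).2⟩
          nlinarith [abs_nonneg (w i)]
  have htmem : (∑ i, w i * x i) ∈ Set.Icc (-M) M :=
    ⟨by linarith [(abs_le.1 habs).1], by linarith [(abs_le.1 habs).2]⟩
  have hs := hstep _ htmem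
  have heq : c * Real.exp (∑ i, w i * x i) -
      ∑ j ∈ range m, (c * q j) * (if (∑ i, w i * x i) - b j > 0 then (1:ℝ) else 0)
      = c * (Real.exp (∑ i, w i * x i) -
        ∑ j ∈ range m, q j * (if (∑ i, w i * x i) - b j > 0 then (1:ℝ) else 0)) := by
    rw [mul_sub, Finset.mul_sum]
    congr 1
    exact Finset.sum_congr rfl fun j _ => by ring
  rw [heq, abs_mul]
  have h2 : |c| * |Real.exp (∑ i, w i * x i) -
      ∑ j ∈ range m, q j * (if (∑ i, w i * x i) - b j > 0 then (1:ℝ) else 0)|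
      ≤ |c| * (δ/(|c|+1)) := mul_le_mul_of_nonneg_left hs (abs_nonneg c)
  have h3 : |c| * (δ/(|c|+1)) ≤ δ := by
    rw [mul_div_assoc']
    rw [div_le_iff₀ (by positivity)]
    nlinarith [abs_nonneg c]
  linarith


/-- Finite linear combinations of half-space indicator functions are uniformly dense in
the continuous functions on the unit cube `[0,1]^n` (universal function approximation
for ICCTs, Cybenko-style). -/
theorem halfspace_indicator_combinations_dense (n : ℕ) (hn : 1 ≤ n)
    (f : (Fin n → ℝ) → ℝ)
    (hf : ContinuousOn f {x : Fin n → ℝ | ∀ i, x i ∈ Set.Icc (0 : ℝ) 1})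
    (ε : ℝ) (hε : 0 < ε) :
    ∃ (N : ℕ) (p : Fin N → ℝ) (w : Fin N → Fin n → ℝ) (b : Fin N → ℝ),
      ∀ x : Fin n → ℝ, (∀ i, x i ∈ Set.Icc (0 : ℝ) 1) →
        |f x - ∑ j, p j * (if (∑ i, w j i * x i) - b j > 0 then (1 : ℝ) else 0)| < ε := by
  classical
  set Kset : Set (Fin n → ℝ) := {x : Fin n → ℝ | ∀ i, x i ∈ Set.Icc (0 : ℝ) 1} with hKset
  have hKcompact : IsCompact Kset := by
    have : Kset = Set.pi Set.univ (fun _ : Fin n => Set.Icc (0:ℝ) 1) := by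
      ext x; simp [Set.mem_pi, hKset, Set.mem_Icc, Pi.le_def, forall_and]
    rw [this]
    exact isCompact_univ_pi fun _ => isCompact_Icc
  haveI : CompactSpace Kset := isCompact_iff_compactSpace.mp hKcompact
  -- the exponential ridge functions, as continuous maps on Kset
  have Fcont : ∀ w : Fin n → ℝ,
      Continuous (fun x : Kset => Real.exp (∑ i, w i * (x : Fin n → ℝ) i)) := by
    intro w
    exact Real.continuous_exp.comp (continuous_finset_sum _ fun i _ =>
      continuous_const.mul ((continuous_apply i).comp continuous_subtype_val))
  set F : (Fin n → ℝ) → C(Kset, ℝ) :=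
    fun w => ⟨fun x => Real.exp (∑ i, w i * (x : Fin n → ℝ) i), Fcont w⟩ with hF
  set S : Set C(Kset, ℝ) := Set.range F with hS
  -- S is a submonoid
  have hone : (1 : C(Kset, ℝ)) ∈ S := ⟨0, by ext x; simp [hF]⟩
  have hmul : ∀ a ∈ S, ∀ c ∈ S, a * c ∈ S := by
    rintro a ⟨wa, rfl⟩ c ⟨wc, rfl⟩
    refine ⟨wa + wc, ?_⟩
    ext x
    simp only [hF, ContinuousMap.mul_apply, ContinuousMap.coe_mk, Pi.add_apply]
    rw [← Real.exp_add, ← Finset.sum_add_distrib]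
    congr 1
    exact Finset.sum_congr rfl fun i _ => by ring
  set Smon : Submonoid C(Kset, ℝ) :=
    { carrier := S, one_mem' := hone, mul_mem' := fun ha hc => hmul _ ha _ hc } with hSmon
  -- Stone-Weierstrass
  set A : Subalgebra ℝ C(Kset, ℝ) := Algebra.adjoin ℝ S with hA
  have hsep : A.SeparatesPoints := by
    intro x y hxy
    have : ∃ i, (x : Fin n → ℝ) i ≠ (y : Fin n → ℝ) i := by
      by_contra hc
      push_neg at hc
      exact hxy (Subtype.ext (funext hc))
    obtain ⟨i, hi⟩ := this
    refine ⟨F (Pi.single i 1), ⟨F (Pi.single i 1), Algebra.subset_adjoin ⟨_, rfl⟩, rfl⟩, ?_⟩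
    have hval : ∀ z : Kset, F (Pi.single i 1) z = Real.exp ((z : Fin n → ℝ) i) := by
      intro z
      simp only [hF, ContinuousMap.coe_mk]
      congr 1
      rw [Finset.sum_eq_single i]
      · simp
      · intro j _ hj; simp [Pi.single_apply, hj]
      · simp
    rw [hval x, hval y]
    exact fun hc => hi (Real.exp_injective hc)
  set f' : C(Kset, ℝ) := ⟨Kset.restrict f, hf.restrict⟩ with hf'
  obtain ⟨g, hg⟩ := ContinuousMap.exists_mem_subalgebra_near_continuousMap_of_separatesPoints
    A hsep f' (ε/2) (by positivity)
  -- g is a finite linear combination of elements of S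
  have hgspan : (g : C(Kset, ℝ)) ∈ Submodule.span ℝ S := by
    have h1 : Submonoid.closure S ≤ Smon := Submonoid.closure_le.2 le_rfl
    have h2 : (↑(Submonoid.closure S) : Set C(Kset, ℝ)) ⊆ (Submodule.span ℝ S : Set C(Kset, ℝ)) :=
      fun z hz => Submodule.subset_span (h1 hz)
    have h3 := Algebra.adjoin_eq_span_of_subset (R := ℝ) h2
    rw [← h3]
    exact g.2
  obtain ⟨m, c, v, hv⟩ := Submodule.mem_span_set'.mp hgspan
  -- choose weight vectors for each generator
  have hw : ∀ i : Fin m, ∃ wi : Fin n → ℝ, F wi = (v i : C(Kset, ℝ)) := fun i => Set.mem_range.mp (v i).2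
  choose W hW using hw
  -- approximate each ridge term by a step combination
  set δ : ℝ := ε / (2 * (m + 1)) with hδdef
  have hδ : 0 < δ := by positivity
  have happrox : ∀ i : Fin m, ∃ gi, IsComb n gi ∧ ∀ x : Fin n → ℝ,
      (∀ j, x j ∈ Set.Icc (0:ℝ) 1) → |c i * Real.exp (∑ j, W i j * x j) - gi x| ≤ δ :=
    fun i => isComb_ridge n (c i) (W i) δ hδ
  choose G hG1 hG2 using happrox
  have hcomb : IsComb n (fun x => ∑ i : Fin m, G i x) :=
    isComb_sum Finset.univ _ fun i _ => hG1 i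
  obtain ⟨N, p, w, b, hrep⟩ := hcomb
  refine ⟨N, fun j => p j, fun j => w j, fun j => b j, ?_⟩
  intro x hx
  have hxK : x ∈ Kset := hx
  -- value of g at x
  have hgval : (g : C(Kset, ℝ)) ⟨x, hxK⟩ = ∑ i : Fin m, c i * Real.exp (∑ j, W i j * x j) := by
    rw [← hv, ContinuousMap.sum_apply]
    refine Finset.sum_congr rfl fun i _ => ?_
    rw [ContinuousMap.smul_apply, ← hW i]
    simp only [hF, ContinuousMap.coe_mk, smul_eq_mul]
  have hbound1 : |f x - (g : C(Kset, ℝ)) ⟨x, hxK⟩| < ε/2 := by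
    have h1 := ContinuousMap.norm_coe_le_norm ((g : C(Kset, ℝ)) - f') ⟨x, hxK⟩
    have h2 : ((g : C(Kset, ℝ)) - f') ⟨x, hxK⟩ = (g : C(Kset, ℝ)) ⟨x, hxK⟩ - f x := by
      simp [hf']; rfl
    rw [h2, Real.norm_eq_abs] at h1
    rw [abs_sub_comm]
    exact lt_of_le_of_lt h1 hg
  have hkey : f x - ∑ i : Fin m, G i x
      = (f x - (g : C(Kset, ℝ)) ⟨x, hxK⟩)
        + ∑ i : Fin m, (c i * Real.exp (∑ j, W i j * x j) - G i x) := by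
    rw [Finset.sum_sub_distrib, ← hgval]; ring
  have hbound2 : |∑ i : Fin m, (c i * Real.exp (∑ j, W i j * x j) - G i x)| ≤ m * δ := by
    calc |∑ i : Fin m, (c i * Real.exp (∑ j, W i j * x j) - G i x)|
        ≤ ∑ i : Fin m, |c i * Real.exp (∑ j, W i j * x j) - G i x| :=
          Finset.abs_sum_le_sum_abs _ _
      _ ≤ ∑ _i : Fin m, δ := Finset.sum_le_sum fun i _ => hG2 i x hx
      _ = m * δ := by simp [mul_comm]
  have hmd : (m : ℝ) * δ ≤ ε / 2 := by
    rw [hδdef, show (m:ℝ) * (ε / (2 * ((m:ℝ) + 1))) = ((m:ℝ) * ε) / (2 * ((m:ℝ) + 1)) by ring,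
      div_le_div_iff₀ (by positivity) (by norm_num)]
    have : (0:ℝ) ≤ m := Nat.cast_nonneg m
    nlinarith
  have hfin : ∑ j : Fin N, p j * (if (∑ i, w j i * x i) - b j > 0 then (1:ℝ) else 0)
      = ∑ i : Fin m, G i x := by
    rw [Fin.sum_univ_eq_sum_range (fun j => p j * (if (∑ i, w j i * x i) - b j > 0 then (1:ℝ) else 0)) N]
    exact (hrep x).symm
  rw [hfin, hkey]
  calc |(f x - (g : C(Kset, ℝ)) ⟨x, hxK⟩)
        + ∑ i : Fin m, (c i * Real.exp (∑ j, W i j * x j) - G i x)|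
      ≤ |f x - (g : C(Kset, ℝ)) ⟨x, hxK⟩|
        + |∑ i : Fin m, (c i * Real.exp (∑ j, W i j * x j) - G i x)| := abs_add_le _ _
    _ < ε := by linarith
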